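/- Let U₁, …, U_m be subspaces of a finite-dimensional real inner product space with orthogonal projections P₁, …, P_m, and let T = (I - P_m) ⋯ (I - P₁). Then T^k y converges, as k → ∞, to the orthogonal projection of y onto the orthogonal complement of U₁ + ⋯ + U_m. -/

import Mathlib

open Submodule Filter Topology

noncomputable def proj {E : Type*} [NormedAddCommGroup E] [InnerProductSpace ℝ E]
    [FiniteDimensional ℝ E] (U : Submodule ℝ E) : E →ₗ[ℝ] E :=
  U.subtype ∘ₗ (orthogonalProjection U).toLinearMap

section Aux

variable {E : Type*} [NormedAddCommGroup E] [InnerProductSpace ℝ E] [FiniteDimensional ℝ E]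

lemma proj_mem (W : Submodule ℝ E) (x : E) : proj W x ∈ W := (orthogonalProjection W x).2

lemma proj_eq_self (W : Submodule ℝ E) {x : E} (hx : x ∈ W) : proj W x = x := by
  have h : orthogonalProjection W x = ⟨x, hx⟩ :=
    orthogonalProjection_mem_subspace_eq_self (⟨x, hx⟩ : W)
  simp [proj, h]

lemma one_sub_proj (W : Submodule ℝ E) : (1 : Module.End ℝ E) - proj W = proj Wᗮ := by
  ext x
  have h := congrArg (Subtype.val) (orthogonalProjection_orthogonal (K := W) x)
  simp only [proj, LinearMap.sub_apply, Module.End.one_apply, LinearMap.coe_comp,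
    Function.comp_apply, ContinuousLinearMap.coe_coe, Submodule.coe_subtype]
  rw [h]; rfl

lemma pythagoras_proj (W : Submodule ℝ E) (x : E) :
    ‖x‖ ^ 2 = ‖proj W x‖ ^ 2 + ‖proj Wᗮ x‖ ^ 2 := by
  simpa [proj] using norm_sq_eq_add_norm_sq_projection x W

lemma norm_proj_le (W : Submodule ℝ E) (x : E) : ‖proj W x‖ ≤ ‖x‖ := by
  have h := pythagoras_proj W x
  nlinarith [norm_nonneg (proj Wᗮ x), norm_nonneg (proj W x), norm_nonneg x]

lemma proj_eq_of_norm_eq (W : Submodule ℝ E) {x : E} (h : ‖proj W x‖ = ‖x‖) :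
    proj W x = x := by
  have hp := pythagoras_proj W x
  have hsq : ‖proj W x‖ ^ 2 = ‖x‖ ^ 2 := by rw [h]
  have h0sq : ‖proj Wᗮ x‖ ^ 2 = 0 := by linarith
  have h0 : ‖proj Wᗮ x‖ = 0 := by
    have := sq_nonneg ‖proj Wᗮ x‖
    nlinarith [norm_nonneg (proj Wᗮ x)]
  have h0' : proj Wᗮ x = 0 := norm_eq_zero.mp h0
  have hsum : proj W x + proj Wᗮ x = x := by
    simpa [proj] using orthogonalProjection_add_orthogonalProjection_orthogonal W x
  rw [h0', add_zero] at hsum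
  exact hsum

lemma proj_inner (W : Submodule ℝ E) (x v : E) :
    (inner ℝ (proj W x) v : ℝ) = inner ℝ x (proj W v) := by
  simpa [proj] using inner_starProjection_left_eq_right W x v

lemma proj_maps_orth {V W : Submodule ℝ E} (hVW : V ≤ W) {x : E} (hx : x ∈ Vᗮ) :
    proj W x ∈ Vᗮ := by
  rw [Submodule.mem_orthogonal]
  intro v hv
  rw [real_inner_comm, proj_inner, proj_eq_self W (hVW hv)]
  rw [Submodule.mem_orthogonal] at hx
  rw [real_inner_comm]
  exact hx v hv

/-- good factors: orthogonal projections onto subspaces containing `V`. -/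
def GoodList (V : Submodule ℝ E) (l : List (Module.End ℝ E)) : Prop :=
  ∀ Q ∈ l, ∃ W : Submodule ℝ E, Q = proj W ∧ V ≤ W

lemma prod_fix {V : Submodule ℝ E} : ∀ {l : List (Module.End ℝ E)}, GoodList V l →
    ∀ {v : E}, v ∈ V → l.prod v = v := by
  intro l
  induction l with
  | nil => intro _ v hv; simp
  | cons Q t ih =>
    intro h v hv
    rw [List.prod_cons, Module.End.mul_apply, ih (fun Q hQ => h Q (List.mem_cons_of_mem _ hQ)) hv]
    obtain ⟨W, rfl, hVW⟩ := h Q (List.mem_cons_self)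
    exact proj_eq_self W (hVW hv)

lemma prod_norm_le {V : Submodule ℝ E} : ∀ {l : List (Module.End ℝ E)}, GoodList V l →
    ∀ x : E, ‖l.prod x‖ ≤ ‖x‖ := by
  intro l
  induction l with
  | nil => intro _ x; simp
  | cons Q t ih =>
    intro h x
    rw [List.prod_cons, Module.End.mul_apply]
    obtain ⟨W, hQ, hVW⟩ := h Q (List.mem_cons_self)
    calc ‖Q (t.prod x)‖ = ‖proj W (t.prod x)‖ := by rw [hQ]
      _ ≤ ‖t.prod x‖ := norm_proj_le W _
      _ ≤ ‖x‖ := ih (fun Q hQ => h Q (List.mem_cons_of_mem _ hQ)) x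

lemma prod_maps_orth {V : Submodule ℝ E} : ∀ {l : List (Module.End ℝ E)}, GoodList V l →
    ∀ {x : E}, x ∈ Vᗮ → l.prod x ∈ Vᗮ := by
  intro l
  induction l with
  | nil => intro _ x hx; simpa using hx
  | cons Q t ih =>
    intro h x hx
    rw [List.prod_cons, Module.End.mul_apply]
    obtain ⟨W, rfl, hVW⟩ := h Q (List.mem_cons_self)
    exact proj_maps_orth hVW (ih (fun Q hQ => h Q (List.mem_cons_of_mem _ hQ)) hx)

lemma prod_eq_of_norm_eq {V : Submodule ℝ E} : ∀ {l : List (Module.End ℝ E)}, GoodList V l →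
    ∀ {x : E}, ‖l.prod x‖ = ‖x‖ → (∀ Q ∈ l, Q x = x) ∧ l.prod x = x := by
  intro l
  induction l with
  | nil => intro _ x _; simp
  | cons Q t ih =>
    intro h x hx
    have ht : GoodList V t := fun Q hQ => h Q (List.mem_cons_of_mem _ hQ)
    obtain ⟨W, hQW, hVW⟩ := h Q (List.mem_cons_self)
    rw [List.prod_cons, Module.End.mul_apply] at hx
    have h1 : ‖Q (t.prod x)‖ ≤ ‖t.prod x‖ := by
      rw [hQW]; exact norm_proj_le W _
    have h2 : ‖t.prod x‖ ≤ ‖x‖ := prod_norm_le ht x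
    have heq : ‖t.prod x‖ = ‖x‖ := le_antisymm h2 (by rw [← hx]; exact h1)
    obtain ⟨hfix, hprod⟩ := ih ht heq
    have hQx : Q x = x := by
      rw [hprod] at hx
      rw [hQW] at hx ⊢
      exact proj_eq_of_norm_eq W hx
    refine ⟨?_, ?_⟩
    · intro Q' hQ'
      rcases List.mem_cons.mp hQ' with h' | h'
      · rw [h']; exact hQx
      · exact hfix Q' h'
    · rw [List.prod_cons, Module.End.mul_apply, hprod, hQx]

end Aux

theorem stmt15 {E : Type*} [NormedAddCommGroup E] [InnerProductSpace ℝ E] [FiniteDimensional ℝ E]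
    {m : ℕ} (U : Fin m → Submodule ℝ E) (y : E) :
    Tendsto (fun k : ℕ =>
        (((List.ofFn fun i : Fin m =>
            ((1 : Module.End ℝ E) - proj (U i))).reverse.prod ^ k)) y)
      atTop (𝓝 (proj (⨆ i, U i)ᗮ y)) := by
  set V : Submodule ℝ E := (⨆ i, U i)ᗮ with hV
  set L : List (Module.End ℝ E) :=
    (List.ofFn fun i : Fin m => ((1 : Module.End ℝ E) - proj (U i))).reverse with hL
  set T : Module.End ℝ E := L.prod with hT
  -- L is a good list
  have hGood : GoodList V L := by
    intro Q hQ
    rw [hL, List.mem_reverse, List.mem_ofFn] at hQ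
    obtain ⟨i, rfl⟩ := hQ
    exact ⟨(U i)ᗮ, one_sub_proj (U i), Submodule.orthogonal_le (le_iSup U i)⟩
  -- strictness: norm equality on Vᗮ forces zero
  have hzero : ∀ x ∈ Vᗮ, ‖T x‖ = ‖x‖ → x = 0 := by
    intro x hxo hx
    obtain ⟨hfix, -⟩ := prod_eq_of_norm_eq hGood hx
    have hxV : x ∈ V := by
      rw [hV, ← Submodule.iInf_orthogonal]
      rw [Submodule.mem_iInf]
      intro i
      have hmem : ((1 : Module.End ℝ E) - proj (U i)) ∈ L := by
        rw [hL, List.mem_reverse, List.mem_ofFn]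
        exact ⟨i, rfl⟩
      have := hfix _ hmem
      rw [one_sub_proj] at this
      rw [← this]
      exact proj_mem _ _
    rw [Submodule.mem_orthogonal] at hxo
    have := hxo x hxV
    exact inner_self_eq_zero.mp this
  -- a contraction constant on Vᗮ
  obtain ⟨c, hc0, hc1, hbound⟩ :
      ∃ c : ℝ, 0 ≤ c ∧ c < 1 ∧ ∀ x ∈ Vᗮ, ‖T x‖ ≤ c * ‖x‖ := by
    have hTc : Continuous fun x : E => ‖T x‖ :=
      continuous_norm.comp T.continuous_of_finiteDimensional
    set K : Set E := (Vᗮ : Set E) ∩ Metric.sphere 0 1 with hK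
    have hKc : IsCompact K :=
      (isCompact_sphere (0 : E) 1).inter_left Vᗮ.closed_of_finiteDimensional
    by_cases hKne : K.Nonempty
    · obtain ⟨x₀, hx₀K, hmax⟩ := hKc.exists_isMaxOn hKne hTc.continuousOn
      obtain ⟨hx₀o, hx₀s⟩ := hx₀K
      have hx₀n : ‖x₀‖ = 1 := by simpa using hx₀s
      refine ⟨‖T x₀‖, norm_nonneg _, ?_, ?_⟩
      · rcases lt_or_ge ‖T x₀‖ 1 with h | h
        · exact h
        · exfalso
          have hle : ‖T x₀‖ ≤ ‖x₀‖ := prod_norm_le hGood x₀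
          have heq : ‖T x₀‖ = ‖x₀‖ := le_antisymm hle (by rw [hx₀n]; exact h)
          have := hzero x₀ hx₀o heq
          rw [this] at hx₀n
          simp at hx₀n
      · intro x hx
        rcases eq_or_ne x 0 with rfl | hxne
        · simp
        · have hxn : ‖x‖ ≠ 0 := norm_ne_zero_iff.mpr hxne
          set u : E := ‖x‖⁻¹ • x with hu
          have huK : u ∈ K := by
            constructor
            · exact Vᗮ.smul_mem _ hx
            · simp [hu, norm_smul, abs_of_nonneg (inv_nonneg.mpr (norm_nonneg x)),
                inv_mul_cancel₀ hxn]
          have hle := hmax huK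
          have hTu : ‖T u‖ = ‖x‖⁻¹ * ‖T x‖ := by
            rw [hu, map_smul, norm_smul, norm_inv, norm_norm]
          have hle' : ‖x‖⁻¹ * ‖T x‖ ≤ ‖T x₀‖ := by rw [← hTu]; exact hle
          calc ‖T x‖ = ‖x‖ * (‖x‖⁻¹ * ‖T x‖) := by field_simp
            _ ≤ ‖x‖ * ‖T x₀‖ := by
                apply mul_le_mul_of_nonneg_left hle' (norm_nonneg x)
            _ = ‖T x₀‖ * ‖x‖ := mul_comm _ _
    · refine ⟨0, le_refl _, one_pos, ?_⟩
      intro x hx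
      rcases eq_or_ne x 0 with rfl | hxne
      · simp
      · exfalso
        apply hKne
        have hxn : ‖x‖ ≠ 0 := norm_ne_zero_iff.mpr hxne
        refine ⟨‖x‖⁻¹ • x, Vᗮ.smul_mem _ hx, ?_⟩
        simp [norm_smul, abs_of_nonneg (inv_nonneg.mpr (norm_nonneg x)),
          inv_mul_cancel₀ hxn]
  -- decomposition of y
  set p : E := proj V y with hp
  set q : E := y - p with hq
  have hpV : p ∈ V := proj_mem V y
  have hqo : q ∈ Vᗮ := by
    rw [hq, hp]
    simpa [proj] using sub_orthogonalProjection_mem_orthogonal (K := V) y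
  have hy : y = p + q := by rw [hq]; abel
  -- powers fix p
  have hfixp : ∀ k : ℕ, (T ^ k) p = p := by
    intro k
    induction k with
    | zero => simp
    | succ n ih => rw [pow_succ, Module.End.mul_apply]
                   rw [prod_fix hGood hpV]
                   exact ih
  -- decay on q
  have hdecay : ∀ k : ℕ, (T ^ k) q ∈ Vᗮ ∧ ‖(T ^ k) q‖ ≤ c ^ k * ‖q‖ := by
    intro k
    induction k with
    | zero => simpa using hqo
    | succ n ih =>
      obtain ⟨ih1, ih2⟩ := ih
      constructor
      · rw [pow_succ', Module.End.mul_apply]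
        exact prod_maps_orth hGood ih1
      · rw [pow_succ', Module.End.mul_apply]
        calc ‖T ((T ^ n) q)‖ ≤ c * ‖(T ^ n) q‖ := hbound _ ih1
          _ ≤ c * (c ^ n * ‖q‖) := mul_le_mul_of_nonneg_left ih2 hc0
          _ = c ^ (n + 1) * ‖q‖ := by ring
  -- limits
  have hq0 : Tendsto (fun k : ℕ => (T ^ k) q) atTop (𝓝 0) := by
    rw [tendsto_zero_iff_norm_tendsto_zero]
    apply squeeze_zero (fun k => norm_nonneg _) (fun k => (hdecay k).2)
    have := (tendsto_pow_atTop_nhds_zero_of_lt_one hc0 hc1).mul_const ‖q‖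
    simpa using this
  have hconv : Tendsto (fun k : ℕ => (T ^ k) y) atTop (𝓝 p) := by
    have : (fun k : ℕ => (T ^ k) y) = fun k : ℕ => p + (T ^ k) q := by
      funext k
      rw [hy, map_add, hfixp]
    rw [this]
    simpa using tendsto_const_nhds.add hq0
  exact hconv
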